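/- Let (u_k)_{k∈ℕ} be a sequence of vectors in ℝ^n with u_k > 0 entrywise and ‖u_k‖ = 1 for all k, and suppose there exists c ∈ ℝ with λ(u_k) ≥ c for all k. Then there exists m > 0 such that min_i (u_k)_i ≥ m for all k. -/

import Mathlib

open Matrix Finset

noncomputable def enormVec {n : ℕ} (u : Fin n → ℝ) : ℝ := Real.sqrt (∑ i, u i ^ 2)

def IsZMatrix {n : ℕ} (B : Matrix (Fin n) (Fin n) ℝ) : Prop :=
  ∀ i j, i ≠ j → B i j ≤ 0

def IsIrreducibleMat {n : ℕ} (B : Matrix (Fin n) (Fin n) ℝ) : Prop :=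
  ¬ ∃ S : Finset (Fin n), S.Nonempty ∧ S ≠ Finset.univ ∧
    ∀ i ∈ S, ∀ j ∉ S, B i j = 0

def IsNonsingularM {n : ℕ} (B : Matrix (Fin n) (Fin n) ℝ) : Prop :=
  IsZMatrix B ∧ IsUnit B ∧ ∀ i j, 0 ≤ B⁻¹ i j

noncomputable def calA {n : ℕ} (A : Matrix (Fin n) (Fin n) ℝ) (Γ : ℝ) (a : Fin n → ℝ)
    (u : Fin n → ℝ) : Matrix (Fin n) (Fin n) ℝ :=
  A + Γ • Matrix.diagonal (fun i => 1 - 1 / (a i + u i ^ 2))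

noncomputable def rvec {n : ℕ} (A : Matrix (Fin n) (Fin n) ℝ) (Γ : ℝ) (a : Fin n → ℝ)
    (u : Fin n → ℝ) (lam : ℝ) : Fin n → ℝ :=
  calA A Γ a u *ᵥ u - lam • u

noncomputable def Jmat {n : ℕ} (A : Matrix (Fin n) (Fin n) ℝ) (Γ : ℝ) (a : Fin n → ℝ)
    (u : Fin n → ℝ) (lam : ℝ) : Matrix (Fin n) (Fin n) ℝ :=
  A + (Γ - lam) • (1 : Matrix (Fin n) (Fin n) ℝ)
    - Γ • Matrix.diagonal (fun i => (a i - u i ^ 2) / (a i + u i ^ 2) ^ 2)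

noncomputable def lamOf {n : ℕ} [NeZero n] (A : Matrix (Fin n) (Fin n) ℝ) (Γ : ℝ)
    (a : Fin n → ℝ) (u : Fin n → ℝ) : ℝ :=
  ⨅ i, (calA A Γ a u *ᵥ u) i / u i

def NewtonSystem {n : ℕ} (A : Matrix (Fin n) (Fin n) ℝ) (Γ : ℝ) (a : Fin n → ℝ)
    (u : Fin n → ℝ) (lam : ℝ) (Δ : Fin n → ℝ) (δ : ℝ) : Prop :=
  Jmat A Γ a u lam *ᵥ Δ - δ • u = -rvec A Γ a u lam ∧
  -(u ⬝ᵥ Δ) = -(1/2 * (u ⬝ᵥ u - 1))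

theorem stmt_13 {n : ℕ} [NeZero n] (A : Matrix (Fin n) (Fin n) ℝ) (a : Fin n → ℝ) (Γ : ℝ)
    (ha : ∀ i, 0 < a i) (hΓ : 0 < Γ)
    (hA : IsNonsingularM A) (hAirr : IsIrreducibleMat A)
    (u : ℕ → Fin n → ℝ)
    (hu : ∀ k, ∀ i, 0 < u k i) (hnorm : ∀ k, enormVec (u k) = 1)
    (c : ℝ) (hc : ∀ k, c ≤ lamOf A Γ a (u k)) :
    ∃ m : ℝ, 0 < m ∧ ∀ k i, m ≤ u k i := by
  classical
  have hn : 0 < n := Nat.pos_of_ne_zero (NeZero.ne n)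
  have huniv : (Finset.univ : Finset (Fin n)).Nonempty := ⟨⟨0, hn⟩, Finset.mem_univ _⟩
  set E : Finset (Fin n × Fin n) := Finset.univ.filter (fun p => A p.1 p.2 < 0) with hE
  set β : ℝ := if h : E.Nonempty then E.inf' h (fun p => -A p.1 p.2) else 1 with hβ
  have hβpos : 0 < β := by
    rw [hβ]; split_ifs with h
    · rw [Finset.lt_inf'_iff]
      intro p hp
      have hp' : A p.1 p.2 < 0 := by simpa [hE] using hp
      linarith
    · exact one_pos
  have hβle : ∀ i j : Fin n, A i j < 0 → β ≤ -A i j := by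
    intro i j hij
    have hmem : (i, j) ∈ E := by simp [hE, hij]
    rw [hβ, dif_pos ⟨_, hmem⟩]
    exact Finset.inf'_le _ hmem
  set M : ℝ := max β (Finset.univ.sup' huniv (fun i => A i i) + Γ - c) with hM
  have hMpos : 0 < M := lt_of_lt_of_le hβpos (le_max_left _ _)
  have hMβ : β ≤ M := le_max_left _ _
  have hMi : ∀ i, A i i + Γ - c ≤ M := by
    intro i
    have h1 : A i i ≤ Finset.univ.sup' huniv (fun i => A i i) :=
      Finset.le_sup' (fun j : Fin n => A j j) (Finset.mem_univ i)
    have h2 := le_max_right β (Finset.univ.sup' huniv (fun i => A i i) + Γ - c)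
    linarith
  set r : ℝ := β / M with hr
  have hrpos : 0 < r := div_pos hβpos hMpos
  have hr1 : r ≤ 1 := (div_le_one hMpos).mpr hMβ
  have hsn : (0:ℝ) < Real.sqrt n := Real.sqrt_pos.mpr (by exact_mod_cast hn)
  refine ⟨r ^ (n - 1) * (Real.sqrt n)⁻¹, by positivity, ?_⟩
  intro k i
  set v : Fin n → ℝ := u k with hv
  have hvpos : ∀ i, 0 < v i := hu k
  have hsum : ∑ j, v j ^ 2 = 1 := by
    have h := hnorm k
    rw [enormVec] at h
    exact Real.sqrt_eq_one.mp h
  have hAterm : ∀ i, c * v i ≤ ∑ j, A i j * v j + Γ * ((1 - 1 / (a i + v i ^ 2)) * v i) := by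
    intro i
    have h2 := hc k
    rw [lamOf] at h2
    have h1 : c ≤ (calA A Γ a v *ᵥ v) i / v i :=
      le_trans h2 (ciInf_le (Set.Finite.bddBelow (Set.finite_range _)) i)
    have h3 : c * v i ≤ (calA A Γ a v *ᵥ v) i := (le_div_iff₀ (hvpos i)).mp h1
    have h4 : (calA A Γ a v *ᵥ v) i
        = ∑ j, A i j * v j + Γ * ((1 - 1 / (a i + v i ^ 2)) * v i) := by
      rw [calA, Matrix.add_mulVec, Pi.add_apply, Matrix.smul_mulVec, Pi.smul_apply,
        Matrix.mulVec_diagonal, smul_eq_mul]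
      congr 1
    linarith
  have hstep : ∀ i j, j ≠ i → A i j < 0 → r * v j ≤ v i := by
    intro i j hne hlt
    have h0 : ∀ j' ∈ Finset.univ.erase i, 0 ≤ -A i j' * v j' := by
      intro j' hj'
      have hz := hA.1 i j' (Ne.symm (Finset.ne_of_mem_erase hj'))
      exact mul_nonneg (by linarith) (hvpos j').le
    have h1 : -A i j * v j ≤ ∑ j' ∈ Finset.univ.erase i, -A i j' * v j' :=
      Finset.single_le_sum h0 (Finset.mem_erase.mpr ⟨hne, Finset.mem_univ j⟩)
    have h2 : ∑ j' ∈ Finset.univ.erase i, -A i j' * v j'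
        = A i i * v i - ∑ j', A i j' * v j' := by
      have h := Finset.add_sum_erase Finset.univ (fun j' => A i j' * v j') (Finset.mem_univ i)
      simp only [neg_mul] at *
      rw [Finset.sum_neg_distrib]
      linarith
    have h3 : 0 < 1 / (a i + v i ^ 2) := by
      have := ha i
      have := sq_nonneg (v i)
      positivity
    have h4 : Γ * ((1 - 1 / (a i + v i ^ 2)) * v i) ≤ Γ * v i := by
      have hle : (1 - 1 / (a i + v i ^ 2)) * v i ≤ 1 * v i :=
        mul_le_mul_of_nonneg_right (by linarith) (hvpos i).le
      have := mul_le_mul_of_nonneg_left hle hΓ.le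
      linarith [this]
    have h5 : -A i j * v j ≤ M * v i := by
      have hAi := hAterm i
      have hMi' := hMi i
      have hmul := mul_le_mul_of_nonneg_right hMi' (hvpos i).le
      nlinarith [h1, h2]
    have h6 : β * v j ≤ M * v i :=
      le_trans (mul_le_mul_of_nonneg_right (hβle i j hlt) (hvpos j).le) h5
    rw [hr, div_mul_eq_mul_div, div_le_iff₀ hMpos]
    linarith
  have hmax : ∃ i0, (Real.sqrt n)⁻¹ ≤ v i0 := by
    have hsumc : ∑ _j : Fin n, ((n:ℝ))⁻¹ ≤ ∑ j, v j ^ 2 := by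
      rw [hsum, Finset.sum_const, Finset.card_fin, nsmul_eq_mul,
        mul_inv_cancel₀ (by exact_mod_cast hn.ne' : (n:ℝ) ≠ 0)]
    obtain ⟨i0, _, h0⟩ := Finset.exists_le_of_sum_le huniv hsumc
    refine ⟨i0, ?_⟩
    have hs := Real.sqrt_le_sqrt h0
    rwa [Real.sqrt_inv, Real.sqrt_sq (hvpos i0).le] at hs
  have hind : ∀ t : ℕ, ∃ S : Finset (Fin n),
      (∀ x ∈ S, r ^ t * (Real.sqrt n)⁻¹ ≤ v x) ∧ min (t + 1) n ≤ S.card := by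
    intro t
    induction t with
    | zero =>
      obtain ⟨i0, h0⟩ := hmax
      refine ⟨{i0}, ?_, ?_⟩
      · intro x hx
        rw [Finset.mem_singleton] at hx
        subst hx
        simpa using h0
      · rw [Finset.card_singleton]
        omega
    | succ t ih =>
      obtain ⟨S, hS, hcard⟩ := ih
      have hmono : ∀ x ∈ S, r ^ (t + 1) * (Real.sqrt n)⁻¹ ≤ v x := by
        intro x hx
        refine le_trans ?_ (hS x hx)
        have hp : r ^ (t + 1) ≤ r ^ t := pow_le_pow_of_le_one hrpos.le hr1 (Nat.le_succ t)
        exact mul_le_mul_of_nonneg_right hp (by positivity)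
      by_cases hSu : S = Finset.univ
      · refine ⟨S, hmono, ?_⟩
        rw [hSu, Finset.card_univ, Fintype.card_fin]
        omega
      · have hSne : S.Nonempty := Finset.card_pos.mp (by omega)
        set T : Finset (Fin n) := Finset.univ \ S with hT
        have hTne : T.Nonempty := by
          rw [hT, Finset.sdiff_nonempty]
          intro hsub
          exact hSu (Finset.univ_subset_iff.mp hsub)
        have hTnu : T ≠ Finset.univ := by
          intro h
          obtain ⟨x, hx⟩ := hSne
          have hxT : x ∈ T := h ▸ Finset.mem_univ x
          rw [hT, Finset.mem_sdiff] at hxT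
          exact hxT.2 hx
        have hex : ∃ i0 ∈ T, ∃ j0, j0 ∉ T ∧ A i0 j0 ≠ 0 := by
          by_contra hno
          push_neg at hno
          exact hAirr ⟨T, hTne, hTnu, fun i0 hi0 j0 hj0 => hno i0 hi0 j0 hj0⟩
        obtain ⟨i0, hi0, j0, hj0, hne0⟩ := hex
        have hj0S : j0 ∈ S := by
          by_contra h
          exact hj0 (by rw [hT, Finset.mem_sdiff]; exact ⟨Finset.mem_univ _, h⟩)
        have hi0S : i0 ∉ S := by
          rw [hT, Finset.mem_sdiff] at hi0
          exact hi0.2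
        have hne : j0 ≠ i0 := fun h => hi0S (h ▸ hj0S)
        have hlt : A i0 j0 < 0 := lt_of_le_of_ne (hA.1 i0 j0 (Ne.symm hne)) hne0
        have hbnd : r ^ (t + 1) * (Real.sqrt n)⁻¹ ≤ v i0 := by
          have h1 := hstep i0 j0 hne hlt
          have h2 := mul_le_mul_of_nonneg_left (hS j0 hj0S) hrpos.le
          calc r ^ (t + 1) * (Real.sqrt n)⁻¹ = r * (r ^ t * (Real.sqrt n)⁻¹) := by ring
          _ ≤ r * v j0 := h2
          _ ≤ v i0 := h1
        refine ⟨insert i0 S, ?_, ?_⟩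
        · intro x hx
          rcases Finset.mem_insert.mp hx with h | h
          · subst h; exact hbnd
          · exact hmono x h
        · rw [Finset.card_insert_of_notMem hi0S]
          omega
  obtain ⟨S, hS, hcard⟩ := hind (n - 1)
  have hScard : S.card = n := by
    have h1 := Finset.card_le_univ S
    rw [Fintype.card_fin] at h1
    omega
  have hSuniv : S = Finset.univ :=
    Finset.eq_univ_of_card S (by rw [hScard, Fintype.card_fin])
  exact hS i (hSuniv ▸ Finset.mem_univ i)
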